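/- Let H be a closed symmetric densely defined operator on a complex Hilbert space, let N₊ = ker(i − H*) and N₋ = ker(−i − H*), and let V : N₊ → N₋ be a linear isometry onto a (closed) subspace of N₋. Define H_V by dom H_V = {u + v + Vv : u ∈ dom H, v ∈ N₊} and H_V(u + v + Vv) = Hu + iv − iVv. Then H_V is a symmetric extension of H. -/

import Mathlib

open scoped InnerProductSpace

/-- The deficiency space `N₊ = ker(i - H*)` of an unbounded operator, as a set. -/
def defectPlus {h : Type*} [NormedAddCommGroup h] [InnerProductSpace ℂ h]
    [CompleteSpace h] (H : h →ₗ.[ℂ] h) : Set h :=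
  {v | ∃ hv : v ∈ H.adjoint.domain, H.adjoint ⟨v, hv⟩ = Complex.I • v}

/-- The deficiency space `N₋ = ker(-i - H*)` of an unbounded operator, as a set. -/
def defectMinus {h : Type*} [NormedAddCommGroup h] [InnerProductSpace ℂ h]
    [CompleteSpace h] (H : h →ₗ.[ℂ] h) : Set h :=
  {v | ∃ hv : v ∈ H.adjoint.domain, H.adjoint ⟨v, hv⟩ = -(Complex.I • v)}

/-- von Neumann extensions.  Let `H` be closed, symmetric,
densely defined, and let `V` be a linear isometry from `N₊` into `N₋`.  The
extension `H_V`, with `dom H_V = {u + v + Vv : u ∈ dom H, v ∈ N₊}` and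
`H_V (u + v + Vv) = Hu + iv - iVv`, is a symmetric extension of `H`. -/
theorem stmt_15 {h : Type*} [NormedAddCommGroup h] [InnerProductSpace ℂ h]
    [CompleteSpace h]
    (H : h →ₗ.[ℂ] h) (hclosed : H.IsClosed)
    (hdense : Dense (H.domain : Set h))
    (hsym : ∀ v w : H.domain, ⟪H v, (w : h)⟫_ℂ = ⟪(v : h), H w⟫_ℂ)
    (V : h →ₗ[ℂ] h)
    (hVmap : ∀ v ∈ defectPlus H, V v ∈ defectMinus H)
    (hViso : ∀ v ∈ defectPlus H, ∀ w ∈ defectPlus H, ⟪V v, V w⟫_ℂ = ⟪v, w⟫_ℂ) :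
    ∀ (u₁ u₂ : H.domain) (v₁ v₂ : h), v₁ ∈ defectPlus H → v₂ ∈ defectPlus H →
      ⟪H u₁ + Complex.I • v₁ - Complex.I • V v₁,
          (u₂ : h) + v₂ + V v₂⟫_ℂ =
        ⟪(u₁ : h) + v₁ + V v₁,
          H u₂ + Complex.I • v₂ - Complex.I • V v₂⟫_ℂ := by
  intro u₁ u₂ v₁ v₂ hv₁ hv₂
  obtain ⟨hm₁, he₁⟩ := hv₁
  obtain ⟨hm₂, he₂⟩ := hv₂
  obtain ⟨hm₁', he₁'⟩ := hVmap v₁ ⟨hm₁, he₁⟩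
  obtain ⟨hm₂', he₂'⟩ := hVmap v₂ ⟨hm₂, he₂⟩
  have adj := H.adjoint_isFormalAdjoint hdense
  -- ⟪H* x, u⟫ = ⟪x, H u⟫
  have a1 : ⟪Complex.I • v₁, (u₂ : h)⟫_ℂ = ⟪v₁, H u₂⟫_ℂ := by
    have := adj ⟨v₁, hm₁⟩ u₂; rwa [he₁] at this
  have a2 : ⟪Complex.I • v₂, (u₁ : h)⟫_ℂ = ⟪v₂, H u₁⟫_ℂ := by
    have := adj ⟨v₂, hm₂⟩ u₁; rwa [he₂] at this
  have b1 : ⟪-(Complex.I • V v₁), (u₂ : h)⟫_ℂ = ⟪V v₁, H u₂⟫_ℂ := by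
    have := adj ⟨V v₁, hm₁'⟩ u₂; rwa [he₁'] at this
  have b2 : ⟪-(Complex.I • V v₂), (u₁ : h)⟫_ℂ = ⟪V v₂, H u₁⟫_ℂ := by
    have := adj ⟨V v₂, hm₂'⟩ u₁; rwa [he₂'] at this
  -- conjugate versions: ⟪H u₁, v₂⟫ = ⟪u₁, i v₂⟫ etc.
  have c2 : ⟪H u₁, v₂⟫_ℂ = ⟪(u₁ : h), Complex.I • v₂⟫_ℂ := by
    have := congrArg (starRingEnd ℂ) a2
    simpa [inner_conj_symm, mul_comm] using this.symm
  have d2 : ⟪H u₁, V v₂⟫_ℂ = ⟪(u₁ : h), -(Complex.I • V v₂)⟫_ℂ := by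
    have := congrArg (starRingEnd ℂ) b2
    simpa [inner_conj_symm] using this.symm
  have iso12 : ⟪V v₁, V v₂⟫_ℂ = ⟪v₁, v₂⟫_ℂ := hViso v₁ ⟨hm₁, he₁⟩ v₂ ⟨hm₂, he₂⟩
  have hs := hsym u₁ u₂
  simp only [inner_add_left, inner_add_right, inner_sub_left, inner_sub_right,
    inner_smul_left, inner_smul_right, inner_neg_left, inner_neg_right,
    Complex.conj_I] at a1 b1 c2 d2 ⊢
  rw [hs, ← a1, ← b1, c2, d2, iso12]
  ring
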